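/- There exists a complex 4 × 2 matrix A with orthonormal columns (AᴴA = I₂) such that every 2 × 2 submatrix of A formed by two distinct rows has smallest singular value strictly less than 1/2 = 1/√4. Consequently, the bound of the Goreinov–Tyrtyshnikov–Zamarashkin hypothesis for k = 2, which is sharp in the real case, fails in the complex case: every 2 × 2 submatrix of this A has an inverse of spectral norm strictly greater than √4 = 2. -/

import Mathlib

open Matrix Complex

/-- There exists a complex `4 × 2` matrix `A` with orthonormal columns (`Aᴴ * A = 1`)
such that every `2 × 2` submatrix of `A` formed by two distinct rows has smallest
singular value strictly less than `1/2 = 1/√4`: for each pair of distinct rows `i ≠ j`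
there is a Hermitian-unit vector `(u, v) ∈ ℂ²` with `‖Mx‖ < 1/2` for the corresponding
submatrix `M`. Hence the bound of the Goreinov–Tyrtyshnikov–Zamarashkin hypothesis for
`k = 2`, sharp in the real case, fails in the complex case. -/
theorem exists_complex_counterexample :
    ∃ A : Matrix (Fin 4) (Fin 2) ℂ, Aᴴ * A = 1 ∧
      ∀ i j : Fin 4, i ≠ j →
        ∃ u v : ℂ, ‖u‖ ^ 2 + ‖v‖ ^ 2 = 1 ∧
          Real.sqrt (‖A i 0 * u + A i 1 * v‖ ^ 2
            + ‖A j 0 * u + A j 1 * v‖ ^ 2) < 1 / 2 := by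
  refine ⟨!![⟨3/5, 1/5⟩, ⟨3/10, 1/10⟩;
             ⟨3/5, 1/5⟩, ⟨-3/10, -1/10⟩;
             ⟨3/10, 1/10⟩, ⟨-1/5, 3/5⟩;
             ⟨3/10, 1/10⟩, ⟨1/5, -3/5⟩], ?_, ?_⟩
  · ext i j
    fin_cases i <;> fin_cases j <;>
      simp [Matrix.mul_apply, Fin.sum_univ_four, Matrix.one_apply, Complex.ext_iff,
        Complex.mul_re, Complex.mul_im, Matrix.vecHead, Matrix.vecTail] <;> norm_num
  · intro i j hij
    fin_cases i <;> fin_cases j <;> (try exact absurd rfl hij) <;>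
      clear hij
    · refine ⟨0, 1, ?_, ?_⟩
      · norm_num [Complex.sq_norm, Complex.normSq_apply]
      · rw [Real.sqrt_lt' (by norm_num : (0:ℝ) < 1/2)]
        norm_num [Complex.sq_norm, Complex.normSq_apply, Complex.mul_re, Complex.mul_im,
          Matrix.vecHead, Matrix.vecTail]
    · refine ⟨⟨-2/3,-1/3⟩, ⟨2/3,0⟩, ?_, ?_⟩
      · norm_num [Complex.sq_norm, Complex.normSq_apply]
      · rw [Real.sqrt_lt' (by norm_num : (0:ℝ) < 1/2)]
        norm_num [Complex.sq_norm, Complex.normSq_apply, Complex.mul_re, Complex.mul_im,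
          Matrix.vecHead, Matrix.vecTail]
    · refine ⟨⟨-2/3,-1/3⟩, ⟨0,2/3⟩, ?_, ?_⟩
      · norm_num [Complex.sq_norm, Complex.normSq_apply]
      · rw [Real.sqrt_lt' (by norm_num : (0:ℝ) < 1/2)]
        norm_num [Complex.sq_norm, Complex.normSq_apply, Complex.mul_re, Complex.mul_im,
          Matrix.vecHead, Matrix.vecTail]
    · refine ⟨0, 1, ?_, ?_⟩
      · norm_num [Complex.sq_norm, Complex.normSq_apply]
      · rw [Real.sqrt_lt' (by norm_num : (0:ℝ) < 1/2)]
        norm_num [Complex.sq_norm, Complex.normSq_apply, Complex.mul_re, Complex.mul_im,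
          Matrix.vecHead, Matrix.vecTail]
    · refine ⟨⟨-2/3,-1/3⟩, ⟨0,-2/3⟩, ?_, ?_⟩
      · norm_num [Complex.sq_norm, Complex.normSq_apply]
      · rw [Real.sqrt_lt' (by norm_num : (0:ℝ) < 1/2)]
        norm_num [Complex.sq_norm, Complex.normSq_apply, Complex.mul_re, Complex.mul_im,
          Matrix.vecHead, Matrix.vecTail]
    · refine ⟨⟨-2/3,-1/3⟩, ⟨-2/3,0⟩, ?_, ?_⟩
      · norm_num [Complex.sq_norm, Complex.normSq_apply]
      · rw [Real.sqrt_lt' (by norm_num : (0:ℝ) < 1/2)]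
        norm_num [Complex.sq_norm, Complex.normSq_apply, Complex.mul_re, Complex.mul_im,
          Matrix.vecHead, Matrix.vecTail]
    · refine ⟨⟨-2/3,-1/3⟩, ⟨2/3,0⟩, ?_, ?_⟩
      · norm_num [Complex.sq_norm, Complex.normSq_apply]
      · rw [Real.sqrt_lt' (by norm_num : (0:ℝ) < 1/2)]
        norm_num [Complex.sq_norm, Complex.normSq_apply, Complex.mul_re, Complex.mul_im,
          Matrix.vecHead, Matrix.vecTail]
    · refine ⟨⟨-2/3,-1/3⟩, ⟨0,-2/3⟩, ?_, ?_⟩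
      · norm_num [Complex.sq_norm, Complex.normSq_apply]
      · rw [Real.sqrt_lt' (by norm_num : (0:ℝ) < 1/2)]
        norm_num [Complex.sq_norm, Complex.normSq_apply, Complex.mul_re, Complex.mul_im,
          Matrix.vecHead, Matrix.vecTail]
    · refine ⟨1, 0, ?_, ?_⟩
      · norm_num [Complex.sq_norm, Complex.normSq_apply]
      · rw [Real.sqrt_lt' (by norm_num : (0:ℝ) < 1/2)]
        norm_num [Complex.sq_norm, Complex.normSq_apply, Complex.mul_re, Complex.mul_im,
          Matrix.vecHead, Matrix.vecTail]
    · refine ⟨⟨-2/3,-1/3⟩, ⟨0,2/3⟩, ?_, ?_⟩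
      · norm_num [Complex.sq_norm, Complex.normSq_apply]
      · rw [Real.sqrt_lt' (by norm_num : (0:ℝ) < 1/2)]
        norm_num [Complex.sq_norm, Complex.normSq_apply, Complex.mul_re, Complex.mul_im,
          Matrix.vecHead, Matrix.vecTail]
    · refine ⟨⟨-2/3,-1/3⟩, ⟨-2/3,0⟩, ?_, ?_⟩
      · norm_num [Complex.sq_norm, Complex.normSq_apply]
      · rw [Real.sqrt_lt' (by norm_num : (0:ℝ) < 1/2)]
        norm_num [Complex.sq_norm, Complex.normSq_apply, Complex.mul_re, Complex.mul_im,
          Matrix.vecHead, Matrix.vecTail]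
    · refine ⟨1, 0, ?_, ?_⟩
      · norm_num [Complex.sq_norm, Complex.normSq_apply]
      · rw [Real.sqrt_lt' (by norm_num : (0:ℝ) < 1/2)]
        norm_num [Complex.sq_norm, Complex.normSq_apply, Complex.mul_re, Complex.mul_im,
          Matrix.vecHead, Matrix.vecTail]
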